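/- Let A be a unital based ring with basis S and suppose c, s ∈ S are central elements of A with s = c* (the anti-involution image). Suppose there exist distinct basis elements (d_i)_{i≥0} of S with d_0 = s satisfying the relations d_{2i}·c = d_{2i−1} + d_{2i+1} and d_{2i+1}·s = d_{2i} + d_{2i+2} for all applicable i, together with s·c = 1 + g + d_1 for some basis element g. Then the subring of A generated by c and s contains all d_i, i.e. every d_i appears with nonzero coefficient in some product c^m s^n. -/

import Mathlib

lemma repr_mul_eq {A I : Type*} [Ring A] (B : Module.Basis I ℤ A) (x y : A) (t : I) :
    B.repr (x * y) t = (B.repr x).sum (fun j a => a * B.repr (B j * y) t) := by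
  conv_lhs => rw [← B.linearCombination_repr x]
  rw [Finsupp.linearCombination_apply, Finsupp.sum, Finset.sum_mul, map_sum,
    Finsupp.sum, Finsupp.coe_finset_sum, Finset.sum_apply]
  refine Finset.sum_congr rfl fun j _ => ?_
  rw [smul_mul_assoc, map_smul, Finsupp.smul_apply, smul_eq_mul]

lemma repr_mul_nonneg {A I : Type*} [Ring A] (B : Module.Basis I ℤ A)
    (hpos : ∀ i j t, 0 ≤ B.repr (B i * B j) t)
    (x : A) (hx : ∀ t, 0 ≤ B.repr x t) (j' : I) (t : I) :
    0 ≤ B.repr (x * B j') t := by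
  rw [repr_mul_eq]
  exact Finset.sum_nonneg fun j _ => mul_nonneg (hx j) (hpos j j' t)

lemma repr_mul_pos {A I : Type*} [Ring A] (B : Module.Basis I ℤ A)
    (hpos : ∀ i j t, 0 ≤ B.repr (B i * B j) t)
    (x : A) (hx : ∀ t, 0 ≤ B.repr x t) (j j' t : I)
    (hj : 0 < B.repr x j) (hjt : 0 < B.repr (B j * B j') t) :
    0 < B.repr (x * B j') t := by
  rw [repr_mul_eq, Finsupp.sum]
  have hmem : j ∈ (B.repr x).support := Finsupp.mem_support_iff.2 (by omega)
  calc (0:ℤ) < B.repr x j * B.repr (B j * B j') t := mul_pos hj hjt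
    _ ≤ _ := Finset.single_le_sum (f := fun j => B.repr x j * B.repr (B j * B j') t)
        (fun k _ => mul_nonneg (hx k) (hpos k j' t)) hmem



/-- let `A` be a unital based ring with `ℤ₊`-basis indexed by
`I`, with `c, s ∈ S` central and `s = c*`.  Suppose there are distinct basis
elements `d i` with `d 0 = s`, `s·c = 1 + g + d 1`,
`d (2i)·c = d (2i−1) + d (2i+1)` and `d (2i+1)·s = d (2i) + d (2i+2)`.
Then every `d i` appears with nonzero coefficient in some product `c^m s^n`;
in particular all `d i` lie in the subring generated by `c` and `s`. -/
theorem stmt19 {A I : Type*} [Ring A] [DecidableEq I]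
    (B : Module.Basis I ℤ A) (i₀ : I) (hone : B i₀ = 1)
    (hpos : ∀ i j t, 0 ≤ B.repr (B i * B j) t)
    (star : I → I) (hinv : Function.Involutive star)
    (hanti : ∀ i j t, B.repr (B i * B j) t = B.repr (B (star j) * B (star i)) (star t))
    (c s : I) (hcs : s = star c)
    (hc_central : ∀ x : A, B c * x = x * B c)
    (hs_central : ∀ x : A, B s * x = x * B s)
    (d : ℕ → I) (hd_inj : Function.Injective d) (hd0 : d 0 = s)
    (g : I)
    (hsc : B s * B c = 1 + B g + B (d 1))
    (heven : ∀ i : ℕ, 1 ≤ i → B (d (2 * i)) * B c = B (d (2 * i - 1)) + B (d (2 * i + 1)))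
    (hodd : ∀ i : ℕ, B (d (2 * i + 1)) * B s = B (d (2 * i)) + B (d (2 * i + 2))) :
    ∀ i : ℕ, ∃ m n : ℕ, B.repr ((B c) ^ m * (B s) ^ n) (d i) ≠ 0 := by
  -- all coefficients of c^m s^n are nonnegative
  have hone' : ∀ t, 0 ≤ B.repr (1 : A) t := by
    intro t
    rw [← hone, B.repr_self]
    rcases eq_or_ne i₀ t with h | h <;> simp [Finsupp.single_apply, h]
  have hnn : ∀ m n : ℕ, ∀ t, 0 ≤ B.repr ((B c) ^ m * (B s) ^ n) t := by
    intro m n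
    induction n with
    | zero =>
        induction m with
        | zero => simpa using hone'
        | succ m ihm =>
            intro t
            have : (B c) ^ (m + 1) * (B s) ^ 0 = ((B c) ^ m * (B s) ^ 0) * B c := by
              simp [pow_succ]
            rw [this]
            exact repr_mul_nonneg B hpos _ ihm c t
    | succ n ihn =>
        intro t
        have : (B c) ^ m * (B s) ^ (n + 1) = ((B c) ^ m * (B s) ^ n) * B s := by
          rw [pow_succ, ← mul_assoc]
        rw [this]
        exact repr_mul_nonneg B hpos _ ihn s t
  -- strengthen to positivity, prove by induction
  suffices h : ∀ i : ℕ, ∃ m n : ℕ, 0 < B.repr ((B c) ^ m * (B s) ^ n) (d i) by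
    intro i; obtain ⟨m, n, h⟩ := h i; exact ⟨m, n, by omega⟩
  intro i
  induction i with
  | zero =>
      refine ⟨0, 1, ?_⟩
      simp [hd0, B.repr_self]
  | succ k ih =>
      obtain ⟨m, n, hk⟩ := ih
      rcases Nat.even_or_odd k with ⟨i, hi⟩ | ⟨i, hi⟩
      · -- k = 2i even, multiply by c on the right
        refine ⟨m + 1, n, ?_⟩
        have hx : (B c) ^ (m + 1) * (B s) ^ n = ((B c) ^ m * (B s) ^ n) * B c := by
          rw [pow_succ, mul_assoc, hc_central ((B s) ^ n), ← mul_assoc]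
        rw [hx]
        refine repr_mul_pos B hpos _ (hnn m n) (d k) c (d (k + 1)) hk ?_
        rcases Nat.eq_zero_or_pos i with h0 | h1
        · subst h0
          have hk0 : k = 0 := by omega
          subst hk0
          simp only [Nat.zero_add]
          rw [hd0, hsc]
          have h1 := hone' (d 1)
          have h2 := (B.repr (B g)) (d 1)
          have hg : 0 ≤ B.repr (B g) (d 1) := by
            rw [B.repr_self]
            rcases eq_or_ne g (d 1) with h | h <;> simp [Finsupp.single_apply, h]
          simp only [map_add]
          have hd1 : B.repr (B (d 1)) (d 1) = 1 := by simp [B.repr_self]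
          simp only [Finsupp.add_apply, hd1]
          omega
        · have hk2 : k = 2 * i := by omega
          subst hk2
          rw [heven i h1]
          have hge : 0 ≤ B.repr (B (d (2 * i - 1))) (d (2 * i + 1)) := by
            rw [B.repr_self]
            rcases eq_or_ne (d (2*i-1)) (d (2*i+1)) with h | h <;>
              simp [Finsupp.single_apply, h]
          have hd1 : B.repr (B (d (2 * i + 1))) (d (2 * i + 1)) = 1 := by
            simp [B.repr_self]
          simp only [map_add, Finsupp.add_apply, hd1]
          omega
      · -- k = 2i+1 odd, multiply by s on the right
        refine ⟨m, n + 1, ?_⟩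
        have hx : (B c) ^ m * (B s) ^ (n + 1) = ((B c) ^ m * (B s) ^ n) * B s := by
          rw [pow_succ, ← mul_assoc]
        rw [hx]
        refine repr_mul_pos B hpos _ (hnn m n) (d k) s (d (k + 1)) hk ?_
        have hk2 : k = 2 * i + 1 := by omega
        subst hk2
        rw [hodd i]
        have hge : 0 ≤ B.repr (B (d (2 * i))) (d (2 * i + 1 + 1)) := by
          rw [B.repr_self]
          rcases eq_or_ne (d (2*i)) (d (2*i+1+1)) with h | h <;>
            simp [Finsupp.single_apply, h]
        have hd1 : B.repr (B (d (2 * i + 2))) (d (2 * i + 1 + 1)) = 1 := by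
          simp [B.repr_self]
        simp only [map_add, Finsupp.add_apply, hd1]
        omega
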